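/- arXiv:2312.12528 — 3 statements merged into one kernel-verified Lean document; each statement's English description precedes it below -/
import Mathlib

section
/- Let R be a finite direct product of commutative Noetherian local rings and M a finitely generated R-module. Then GL_n(R) acts transitively on the set of surjective R-module homomorphisms R^n → M: if F₁, F₂ : R^n → M are surjections, there exists g ∈ GL_n(R) (an R-module automorphism of R^n) with F₂ = F₁ ∘ g. -/
open Function

/-- Transitivity over a field. -/
theorem aux_field {K V W : Type*} [Field K] [AddCommGroup V] [Module K V]
    [AddCommGroup W] [Module K W] [FiniteDimensional K V] [FiniteDimensional K W]
    (F₁ F₂ : V →ₗ[K] W) (h₁ : Function.Surjective F₁) (h₂ : Function.Surjective F₂) :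
    ∃ g : V ≃ₗ[K] V, F₂ = F₁ ∘ₗ (g : V →ₗ[K] V) := by
  obtain ⟨s₁, hs₁⟩ := F₁.exists_rightInverse_of_surjective (LinearMap.range_eq_top.2 h₁)
  obtain ⟨s₂, hs₂⟩ := F₂.exists_rightInverse_of_surjective (LinearMap.range_eq_top.2 h₂)
  have hs₁' : ∀ w, F₁ (s₁ w) = w := fun w => congrFun (congrArg DFunLike.coe hs₁) w
  have hs₂' : ∀ w, F₂ (s₂ w) = w := fun w => congrFun (congrArg DFunLike.coe hs₂) w
  have hrank : Module.finrank K (LinearMap.ker F₂) = Module.finrank K (LinearMap.ker F₁) := by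
    have e1 := LinearMap.finrank_range_add_finrank_ker F₁
    have e2 := LinearMap.finrank_range_add_finrank_ker F₂
    rw [LinearMap.range_eq_top.2 h₁, finrank_top] at e1
    rw [LinearMap.range_eq_top.2 h₂, finrank_top] at e2
    omega
  let ψ : (LinearMap.ker F₂) ≃ₗ[K] (LinearMap.ker F₁) := LinearEquiv.ofFinrankEq _ _ hrank
  -- projections to kernels
  have hk₂ : ∀ x : V, x - s₂ (F₂ x) ∈ LinearMap.ker F₂ := by
    intro x; simp [LinearMap.mem_ker, hs₂']
  have hk₁ : ∀ x : V, x - s₁ (F₁ x) ∈ LinearMap.ker F₁ := by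
    intro x; simp [LinearMap.mem_ker, hs₁']
  let p₂ : V →ₗ[K] LinearMap.ker F₂ :=
    LinearMap.codRestrict _ (LinearMap.id - s₂ ∘ₗ F₂) (fun x => hk₂ x)
  let p₁ : V →ₗ[K] LinearMap.ker F₁ :=
    LinearMap.codRestrict _ (LinearMap.id - s₁ ∘ₗ F₁) (fun x => hk₁ x)
  let fwd : V →ₗ[K] V := (LinearMap.ker F₁).subtype ∘ₗ ψ.toLinearMap ∘ₗ p₂ + s₁ ∘ₗ F₂
  let bwd : V →ₗ[K] V := (LinearMap.ker F₂).subtype ∘ₗ ψ.symm.toLinearMap ∘ₗ p₁ + s₂ ∘ₗ F₁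
  have kerψ : ∀ k : LinearMap.ker F₂, F₁ ((ψ k : V)) = 0 := fun k => (ψ k).2
  have kerψ' : ∀ k : LinearMap.ker F₁, F₂ ((ψ.symm k : V)) = 0 := fun k => (ψ.symm k).2
  have hfwd : ∀ x, fwd x = (ψ ⟨x - s₂ (F₂ x), hk₂ x⟩ : V) + s₁ (F₂ x) := fun x => rfl
  have hbwd : ∀ x, bwd x = (ψ.symm ⟨x - s₁ (F₁ x), hk₁ x⟩ : V) + s₂ (F₁ x) := fun x => rfl
  have hF₁fwd : ∀ x, F₁ (fwd x) = F₂ x := by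
    intro x
    rw [hfwd, map_add, kerψ, hs₁', zero_add]
  have hF₂bwd : ∀ x, F₂ (bwd x) = F₁ x := by
    intro x
    rw [hbwd, map_add, kerψ', hs₂', zero_add]
  have h1 : fwd ∘ₗ bwd = LinearMap.id := by
    ext y
    have e : (⟨bwd y - s₂ (F₂ (bwd y)), hk₂ (bwd y)⟩ : LinearMap.ker F₂)
        = ψ.symm ⟨y - s₁ (F₁ y), hk₁ y⟩ := by
      ext
      show bwd y - s₂ (F₂ (bwd y)) = _
      rw [hF₂bwd, hbwd, add_sub_cancel_right]
    show fwd (bwd y) = y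
    rw [hfwd, e, LinearEquiv.apply_symm_apply, hF₂bwd]
    show y - s₁ (F₁ y) + s₁ (F₁ y) = y
    abel
  have h2 : bwd ∘ₗ fwd = LinearMap.id := by
    ext y
    have e : (⟨fwd y - s₁ (F₁ (fwd y)), hk₁ (fwd y)⟩ : LinearMap.ker F₁)
        = ψ ⟨y - s₂ (F₂ y), hk₂ y⟩ := by
      ext
      show fwd y - s₁ (F₁ (fwd y)) = _
      rw [hF₁fwd, hfwd, add_sub_cancel_right]
    show bwd (fwd y) = y
    rw [hbwd, e, LinearEquiv.symm_apply_apply, hF₁fwd]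
    show y - s₂ (F₂ y) + s₂ (F₂ y) = y
    abel
  refine ⟨LinearEquiv.ofLinear fwd bwd h1 h2, ?_⟩
  ext x
  simpa using (hF₁fwd x).symm

theorem mem_ideal_smul_top_pi_iff {S : Type*} [CommRing S] {n : ℕ} (J : Ideal S)
    (x : Fin n → S) :
    x ∈ (J • ⊤ : Submodule S (Fin n → S)) ↔ ∀ j, x j ∈ J := by
  constructor
  · intro hx
    have hle : (J • ⊤ : Submodule S (Fin n → S)) ≤
        Submodule.pi Set.univ fun _ => (J : Submodule S S) := by
      refine Submodule.smul_le.2 fun r hr v _ => ?_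
      refine Submodule.mem_pi.2 fun j _ => ?_
      simpa [smul_eq_mul] using J.mul_mem_right (v j) hr
    exact fun j => Submodule.mem_pi.1 (hle hx) j (Set.mem_univ j)
  · intro h
    have hx : x = ∑ j, x j • (Pi.single j 1 : Fin n → S) := by
      have : ∀ j, x j • (Pi.single j 1 : Fin n → S) = Pi.single j (x j) := by
        intro j; funext k
        by_cases hk : k = j <;> simp [Pi.single_apply, hk]
      simp only [this, Finset.univ_sum_single]
    rw [hx]
    exact Submodule.sum_mem _ fun j _ => Submodule.smul_mem_smul (h j) Submodule.mem_top

theorem quot_tower {S : Type*} [CommRing S] (I : Ideal S) {M : Type*} [AddCommGroup M]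
    [Module S M] : IsScalarTower S (S ⧸ I) (M ⧸ (I • ⊤ : Submodule S M)) := by
  constructor
  intro s k x
  obtain ⟨r, rfl⟩ := Ideal.Quotient.mk_surjective k
  obtain ⟨m, rfl⟩ := Submodule.Quotient.mk_surjective _ x
  have h1 : s • (Ideal.Quotient.mk I r) = Ideal.Quotient.mk I (s * r) := rfl
  rw [h1, Module.Quotient.mk_smul_mk, Module.Quotient.mk_smul_mk, ← Submodule.Quotient.mk_smul,
    smul_smul]

theorem aux_max {S : Type*} [CommRing S] (𝔪 : Ideal S) [𝔪.IsMaximal]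
    {M : Type*} [AddCommGroup M] [Module S M] [Module.Finite S M]
    {n : ℕ} (F₁ F₂ : (Fin n → S) →ₗ[S] M)
    (h₁ : Function.Surjective F₁) (h₂ : Function.Surjective F₂) :
    ∃ h : Matrix (Fin n) (Fin n) S,
      F₂ = F₁ ∘ₗ Matrix.toLin' h ∧ h.det ∉ 𝔪 := by
  classical
  letI K := S ⧸ 𝔪
  letI : Field K := Ideal.Quotient.field 𝔪
  have msurj : Function.Surjective (Ideal.Quotient.mk 𝔪) := Ideal.Quotient.mk_surjective
  have asurj : Function.Surjective (algebraMap S K) := by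
    rwa [Ideal.Quotient.algebraMap_eq]
  set V := (Fin n → S) ⧸ (𝔪 • ⊤ : Submodule S (Fin n → S)) with hV
  set Mb := M ⧸ (𝔪 • ⊤ : Submodule S M) with hMb
  letI : IsScalarTower S K V := quot_tower 𝔪
  letI : IsScalarTower S K Mb := quot_tower 𝔪
  haveI : FiniteDimensional K V := Module.Finite.of_restrictScalars_finite S K V
  haveI : FiniteDimensional K Mb := Module.Finite.of_restrictScalars_finite S K Mb
  -- the reductions of F₁ F₂
  have cond : ∀ F : (Fin n → S) →ₗ[S] M,
      (𝔪 • ⊤ : Submodule S (Fin n → S)) ≤ Submodule.comap F (𝔪 • ⊤ : Submodule S M) := by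
    intro F
    rw [← Submodule.map_le_iff_le_comap, Submodule.map_smul'']
    exact Submodule.smul_mono le_rfl le_top
  let Fb : ((Fin n → S) →ₗ[S] M) → (V →ₗ[K] Mb) := fun F =>
    (Submodule.mapQ _ _ F (cond F)).extendScalarsOfSurjective asurj
  have Fb_mk : ∀ (F : (Fin n → S) →ₗ[S] M) (x : Fin n → S),
      Fb F (Submodule.Quotient.mk x) = Submodule.Quotient.mk (F x) := by
    intro F x
    rfl
  have Fbsurj : ∀ (F : (Fin n → S) →ₗ[S] M), Function.Surjective F →
      Function.Surjective (Fb F) := by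
    intro F hF y
    obtain ⟨m, rfl⟩ := Submodule.Quotient.mk_surjective _ y
    obtain ⟨x, rfl⟩ := hF m
    exact ⟨Submodule.Quotient.mk x, Fb_mk F x⟩
  obtain ⟨g, hg⟩ := aux_field (Fb F₁) (Fb F₂) (Fbsurj F₁ h₁) (Fbsurj F₂ h₂)
  -- basis of V
  let q : (Fin n → S) → V := Submodule.Quotient.mk
  have qsmul : ∀ (s : S) (x : Fin n → S),
      Ideal.Quotient.mk 𝔪 s • q x = q (s • x) := fun s x => rfl
  have key : ∀ c : Fin n → S,
      (∑ j, (Ideal.Quotient.mk 𝔪 (c j)) • q (Pi.single j 1)) = q c := by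
    intro c
    have : ∀ j, (Ideal.Quotient.mk 𝔪 (c j)) • q (Pi.single j 1)
        = q (Pi.single j (c j)) := by
      intro j
      rw [qsmul]
      congr 1
      funext k
      by_cases hk : k = j <;> simp [Pi.single_apply, hk]
    rw [Finset.sum_congr rfl fun j _ => this j]
    show ∑ j, Submodule.mkQ _ (Pi.single j (c j)) = Submodule.mkQ _ c
    rw [← map_sum, Finset.univ_sum_single]
  have bind : LinearIndependent K (fun j : Fin n => q (Pi.single j 1)) := by
    rw [Fintype.linearIndependent_iff]
    intro gc hgc j
    choose c hc using fun j => msurj (gc j)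
    have : q (fun k => c k) = 0 := by
      rw [← key]
      simp only [hc]
      convert hgc using 2
    have hmem : (fun k => c k) ∈ (𝔪 • ⊤ : Submodule S (Fin n → S)) :=
      (Submodule.Quotient.mk_eq_zero _).1 this
    rw [← hc j, Ideal.Quotient.eq_zero_iff_mem]
    exact (mem_ideal_smul_top_pi_iff 𝔪 _).1 hmem j
  have bspan : ⊤ ≤ Submodule.span K (Set.range fun j : Fin n => q (Pi.single j 1)) := by
    rintro v -
    obtain ⟨c, rfl⟩ := Submodule.Quotient.mk_surjective _ v
    show q c ∈ _
    rw [← key c]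
    exact Submodule.sum_mem _ fun j _ =>
      Submodule.smul_mem _ _ (Submodule.subset_span ⟨j, rfl⟩)
  let b : Module.Basis (Fin n) K V := Module.Basis.mk bind bspan
  have hb : ∀ j, b j = q (Pi.single j 1) := fun j => Module.Basis.mk_apply bind bspan j
  -- matrix of g and its lift
  let A := LinearMap.toMatrix b b g.toLinearMap
  have hA : IsUnit A.det := by
    rw [LinearMap.det_toMatrix]
    exact g.isUnit_det'
  choose H hH using fun a c => msurj (A a c)
  have colH : ∀ j, q (Matrix.toLin' (Matrix.of H) (Pi.single j 1)) = g (b j) := by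
    intro j
    have h1 : Matrix.toLin' (Matrix.of H) (Pi.single j 1) = fun a => H a j := by
      rw [Matrix.toLin'_apply, Matrix.mulVec_single_one]
      rfl
    have h2 : g (b j) = ∑ a, A a j • b a := by
      have h3 := Matrix.toLin_self b b A j
      rw [Matrix.toLin_toMatrix] at h3
      exact h3
    rw [h1, h2, ← key fun a => H a j]
    simp only [hH, hb]
  -- the defect lies in 𝔪 • ⊤
  have defect : ∀ j, F₂ (Pi.single j 1) - F₁ (Matrix.toLin' (Matrix.of H) (Pi.single j 1))
      ∈ (𝔪 • ⊤ : Submodule S M) := by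
    intro j
    rw [← Submodule.Quotient.mk_eq_zero, Submodule.Quotient.mk_sub]
    have e1 : (Submodule.Quotient.mk (F₂ (Pi.single j 1)) : Mb) = Fb F₂ (b j) := by
      rw [hb]; exact (Fb_mk F₂ _).symm
    have e2 : (Submodule.Quotient.mk (F₁ (Matrix.toLin' (Matrix.of H) (Pi.single j 1))) : Mb)
        = Fb F₁ (g (b j)) := by
      rw [← colH j]; exact (Fb_mk F₁ _).symm
    rw [e1, e2, hg]
    simp
  -- write the defect as F₁ of something in 𝔪 • ⊤
  have himg : (𝔪 • ⊤ : Submodule S M) = Submodule.map F₁ (𝔪 • ⊤ : Submodule S (Fin n → S)) := by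
    rw [Submodule.map_smul'', Submodule.map_top, LinearMap.range_eq_top.2 h₁]
  have defect' : ∀ j, ∃ c ∈ (𝔪 • ⊤ : Submodule S (Fin n → S)),
      F₁ c = F₂ (Pi.single j 1) - F₁ (Matrix.toLin' (Matrix.of H) (Pi.single j 1)) := by
    intro j
    have := defect j
    rw [himg] at this
    obtain ⟨c, hc, hc'⟩ := this
    exact ⟨c, hc, hc'⟩
  choose c hcmem hceq using defect'
  let h : Matrix (Fin n) (Fin n) S := Matrix.of fun a j => H a j + c j a
  refine ⟨h, ?_, ?_⟩
  · refine Module.Basis.ext (Pi.basisFun S (Fin n)) fun j => ?_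
    have hcol : Matrix.toLin' h (Pi.single j 1)
        = Matrix.toLin' (Matrix.of H) (Pi.single j 1) + c j := by
      rw [Matrix.toLin'_apply, Matrix.toLin'_apply, Matrix.mulVec_single_one,
        Matrix.mulVec_single_one]
      funext a
      simp [h, Matrix.transpose_apply]
    rw [Pi.basisFun_apply, LinearMap.comp_apply, hcol, map_add, hceq j]
    abel
  · -- determinant
    have hmapmk : h.map (Ideal.Quotient.mk 𝔪) = A := by
      ext a j
      have : (c j) a ∈ 𝔪 := (mem_ideal_smul_top_pi_iff 𝔪 _).1 (hcmem j) a
      simp only [Matrix.map_apply, h, Matrix.of_apply, map_add, hH]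
      rw [Ideal.Quotient.eq_zero_iff_mem.2 this, add_zero]
    intro hdet
    have : Ideal.Quotient.mk 𝔪 h.det = 0 := Ideal.Quotient.eq_zero_iff_mem.2 hdet
    rw [RingHom.map_det, RingHom.mapMatrix_apply, hmapmk] at this
    exact hA.ne_zero this

/-- Let `R = ∏ i, R i` be a finite direct product of commutative
Noetherian local rings and `M` a finitely generated `R`-module.  Then `GL_n(R)` acts
transitively on surjections `R^n → M`: for any two surjective `R`-linear maps
`F₁ F₂ : R^n → M` there is an `R`-module automorphism `g` of `R^n` with `F₂ = F₁ ∘ g`. -/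
theorem statement1 {ι : Type*} [Fintype ι] (R : ι → Type*)
    [∀ i, CommRing (R i)] [∀ i, IsNoetherianRing (R i)] [∀ i, IsLocalRing (R i)]
    {M : Type*} [AddCommGroup M] [Module (∀ i, R i) M] [Module.Finite (∀ i, R i) M]
    (n : ℕ) (F₁ F₂ : (Fin n → ∀ i, R i) →ₗ[∀ i, R i] M)
    (h₁ : Function.Surjective F₁) (h₂ : Function.Surjective F₂) :
    ∃ g : (Fin n → ∀ i, R i) ≃ₗ[∀ i, R i] (Fin n → ∀ i, R i),
      F₂ = F₁ ∘ₗ (g : (Fin n → ∀ i, R i) →ₗ[∀ i, R i] (Fin n → ∀ i, R i)) := by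
  classical
  -- componentwise matrices
  have comp : ∀ i : ι, ∃ h : Matrix (Fin n) (Fin n) (∀ i, R i),
      F₂ = F₁ ∘ₗ Matrix.toLin' h ∧ IsUnit (h.det i) := by
    intro i
    have hsurj : Function.Surjective (Pi.evalRingHom R i) := Function.surjective_eval i
    let 𝔪 : Ideal (∀ i, R i) :=
      Ideal.comap (Pi.evalRingHom R i) (IsLocalRing.maximalIdeal (R i))
    haveI : 𝔪.IsMaximal := Ideal.comap_isMaximal_of_surjective _ hsurj
    obtain ⟨h, hcomp, hdet⟩ := aux_max 𝔪 F₁ F₂ h₁ h₂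
    refine ⟨h, hcomp, ?_⟩
    by_contra hu
    exact hdet (IsLocalRing.mem_maximalIdeal _ |>.2 hu)
  choose h hcomp hdet using comp
  let H : Matrix (Fin n) (Fin n) (∀ i, R i) := Matrix.of fun a b => fun i => h i a b i
  have hdetH : IsUnit H.det := by
    have hdet' : ∀ i, IsUnit (H.det i) := by
      intro i
      have e : H.det i = (h i).det i := by
        show (Pi.evalRingHom R i) H.det = (Pi.evalRingHom R i) ((h i).det)
        have e0 : H.map (Pi.evalRingHom R i) = (h i).map (Pi.evalRingHom R i) := rfl
        rw [RingHom.map_det, RingHom.map_det, RingHom.mapMatrix_apply, RingHom.mapMatrix_apply, e0]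
      rw [e]
      exact hdet i
    refine isUnit_iff_exists_inv.2 ⟨fun i => ↑(hdet' i).unit⁻¹, ?_⟩
    funext i
    exact (hdet' i).mul_val_inv
  have hglue : F₂ = F₁ ∘ₗ Matrix.toLin' H := by
    refine LinearMap.ext fun x => ?_
    show F₂ x = F₁ (Matrix.toLin' H x)
    have hone : (1 : ∀ i, R i) = ∑ i, Pi.single i 1 := by
      rw [← Finset.univ_sum_single (1 : ∀ i, R i)]
      rfl
    have hcompx : ∀ i : ι, (Pi.single i 1 : ∀ i, R i) • Matrix.toLin' H x
        = (Pi.single i 1 : ∀ i, R i) • Matrix.toLin' (h i) x := by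
      intro i
      funext a
      funext k
      show (Pi.single i 1 : ∀ i, R i) k * (H.mulVec x a) k
        = (Pi.single i 1 : ∀ i, R i) k * ((h i).mulVec x a) k
      by_cases hk : k = i
      · subst hk
        congr 1
        show (∑ b, H a b * x b) k = (∑ b, h k a b * x b) k
        rw [Finset.sum_apply, Finset.sum_apply]
        rfl
      · simp [Pi.single_apply, hk]
    calc F₂ x = (1 : ∀ i, R i) • F₂ x := (one_smul _ _).symm
      _ = ∑ i, (Pi.single i 1 : ∀ i, R i) • F₂ x := by rw [hone, Finset.sum_smul]
      _ = ∑ i, (Pi.single i 1 : ∀ i, R i) • F₁ (Matrix.toLin' H x) := by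
          refine Finset.sum_congr rfl fun i _ => ?_
          rw [hcomp i]
          show (Pi.single i 1 : ∀ i, R i) • F₁ (Matrix.toLin' (h i) x) = _
          rw [← map_smul F₁ (Pi.single i 1) (Matrix.toLin' (h i) x),
            ← map_smul F₁ (Pi.single i 1) (Matrix.toLin' H x), hcompx i]
      _ = (1 : ∀ i, R i) • F₁ (Matrix.toLin' H x) := by rw [hone, Finset.sum_smul]
      _ = F₁ (Matrix.toLin' H x) := one_smul _ _
  refine ⟨Matrix.toLinearEquiv (Pi.basisFun (∀ i, R i) (Fin n)) H hdetH, ?_⟩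
  have hcoe : (Matrix.toLinearEquiv (Pi.basisFun (∀ i, R i) (Fin n)) H hdetH :
      (Fin n → ∀ i, R i) →ₗ[∀ i, R i] (Fin n → ∀ i, R i)) = Matrix.toLin' H := by
    refine LinearMap.ext fun x => ?_
    show Matrix.toLin (Pi.basisFun (∀ i, R i) (Fin n)) (Pi.basisFun (∀ i, R i) (Fin n)) H x
      = Matrix.toLin' H x
    rw [Matrix.toLin_eq_toLin']
  rw [hcoe]
  exact hglue
end

section
/- Let (R, π, F_q) be a discrete valuation ring with residue field of cardinality q, d ≥ 0 an integer, and M a finite R-module of type μ (i.e., M ≅ ⊕_i R/π^{μ_i}R) with μ₁' ≤ d, where μ₁' is the number of nonzero parts of μ. Then the number of surjective R-module homomorphisms R^d → M equals q^{d·|μ|} · (q^{-1};q^{-1})_d / (q^{-1};q^{-1})_{d−μ₁'}, where (a;q)_n = ∏_{i=0}^{n−1}(1−a q^i). -/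
open Function Submodule Module

/-- Fiber-counting for a surjective additive homomorphism. -/
lemma fiber_count {A B : Type*} [AddCommGroup A] [AddCommGroup B] (φ : A →+ B)
    (hφ : Surjective φ) (P : B → Prop) :
    Nat.card {a : A // P (φ a)} = Nat.card {x : A // φ x = 0} * Nat.card {b : B // P b} := by
  classical
  choose s hs using hφ
  have e : {a : A // P (φ a)} ≃ {x : A // φ x = 0} × {b : B // P b} :=
    { toFun := fun a => (⟨a.1 - s (φ a.1), by simp [hs]⟩, ⟨φ a.1, a.2⟩)
      invFun := fun x => ⟨s x.2.1 + x.1.1, by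
        have : φ (s x.2.1 + x.1.1) = x.2.1 := by simp [hs, x.1.2]
        rw [this]; exact x.2.2⟩
      left_inv := fun a => by simp
      right_inv := fun x => by
        have h1 : φ (s x.2.1 + x.1.1) = x.2.1 := by simp [hs, x.1.2]
        ext
        · simp [h1]
        · simp [h1] }
  rw [Nat.card_congr e, Nat.card_prod]

lemma span_top_iff_li {k : Type*} [Field k] {d l : ℕ} (w : Fin d → (Fin l → k)) :
    span k (Set.range w) = ⊤ ↔
      LinearIndependent k (Matrix.of fun i j => w j i : Matrix (Fin l) (Fin d) k) := by
  set A : Matrix (Fin l) (Fin d) k := Matrix.of fun i j => w j i with hA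
  have hAT : A.transpose = w := rfl
  have h1 : A.rank = finrank k (span k (Set.range w)) := by
    rw [Matrix.rank, Matrix.range_mulVecLin]; rfl
  have h2 : A.rank = finrank k (span k (Set.range A)) := Matrix.rank_eq_finrank_span_row A
  have hfr : finrank k (Fin l → k) = l := by simp
  have hli : LinearIndependent k A ↔ A.rank = l := by
    have := linearIndependent_iff_card_eq_finrank_span (R := k) (b := (A : Fin l → Fin d → k))
    rw [Fintype.card_fin, Set.finrank, eq_comm] at this
    exact this.trans (by rw [h2])
  rw [hli]
  constructor
  · intro h
    rw [h1, h, finrank_top, hfr]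
  · intro h
    apply Submodule.eq_top_of_finrank_eq
    rw [← h1, h, hfr]

lemma count_spanning (k : Type*) [Field k] [Fintype k] (d l : ℕ) (hld : l ≤ d) :
    Nat.card {w : Fin d → (Fin l → k) // span k (Set.range w) = ⊤} =
      ∏ i : Fin l, (Fintype.card k ^ d - Fintype.card k ^ (i : ℕ)) := by
  have e : {w : Fin d → (Fin l → k) // span k (Set.range w) = ⊤} ≃
      {s : Fin l → (Fin d → k) // LinearIndependent k s} :=
    { toFun := fun w => ⟨fun i j => w.1 j i, (span_top_iff_li w.1).mp w.2⟩
      invFun := fun s => ⟨fun j i => s.1 i j, (span_top_iff_li _).mpr s.2⟩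
      left_inv := fun w => rfl
      right_inv := fun s => rfl }
  have hd : l ≤ finrank k (Fin d → k) := by simpa using hld
  rw [Nat.card_congr e, card_linearIndependent hd]
  simp

/-- Let `(R, π, 𝔽_q)` be a DVR with uniformizer `π` and finite residue
field of cardinality `q`, let `d ≥ 0`, and let `M` be a finite `R`-module of type
`μ = (μ₁ ≥ ⋯ ≥ μ_l > 0)` (i.e. `M ≅ ⨁ᵢ R/π^{μ i}`) with `l = μ₁' ≤ d` nonzero parts.
Then the number of surjective `R`-linear maps `R^d → M` equals
`q^{d|μ|} · (q⁻¹;q⁻¹)_d / (q⁻¹;q⁻¹)_{d-l}`, where `(a;q)_n = ∏_{i=0}^{n-1} (1 - a qⁱ)`. -/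
theorem statement2 (R : Type*) [CommRing R] [IsDomain R] [IsDiscreteValuationRing R]
    (π : R) (hπ : Irreducible π)
    (q : ℕ) [Finite (IsLocalRing.ResidueField R)]
    (hq : Nat.card (IsLocalRing.ResidueField R) = q)
    (d l : ℕ) (hld : l ≤ d)
    (μ : Fin l → ℕ) (hμpos : ∀ i, 0 < μ i) (hμanti : ∀ i j : Fin l, i ≤ j → μ j ≤ μ i)
    (M : Type*) [AddCommGroup M] [Module R M]
    (e : M ≃ₗ[R] ∀ i : Fin l, R ⧸ (Ideal.span {π} ^ (μ i))) :
    (Nat.card {f : (Fin d → R) →ₗ[R] M // Function.Surjective f} : ℚ) =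
      (q : ℚ) ^ (d * ∑ i, μ i) *
        (∏ i ∈ Finset.range d, (1 - ((q : ℚ)⁻¹) ^ (i + 1))) /
        (∏ i ∈ Finset.range (d - l), (1 - ((q : ℚ)⁻¹) ^ (i + 1))) := by
  classical
  set kk := IsLocalRing.ResidueField R with hkk
  set m := IsLocalRing.maximalIdeal R with hm
  have hPmax : m = Ideal.span {π} :=
    (IsDiscreteValuationRing.irreducible_iff_uniformizer π).mp hπ
  -- cardinality of the cyclic pieces
  have hcard : ∀ n : ℕ, Nat.card (R ⧸ Ideal.span {π} ^ n) = q ^ n := by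
    intro n
    have hprime : (Ideal.span {π}).IsPrime := hPmax ▸ inferInstance
    have hbot : Ideal.span {π} ≠ (⊥ : Ideal R) := by
      rw [Ne, Ideal.span_singleton_eq_bot]; exact hπ.ne_zero
    have h := cardQuot_pow_of_prime (S := R) (P := Ideal.span {π}) hbot (i := n)
    rw [Submodule.cardQuot_apply, Submodule.cardQuot_apply] at h
    rw [h]
    congr 1
    rw [← hq, ← hPmax]
    rfl
  have hq1 : 1 < q := by
    rw [← hq]
    have : Fintype kk := Fintype.ofFinite _
    rw [Nat.card_eq_fintype_card]
    exact Fintype.one_lt_card_iff_nontrivial.mpr inferInstance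
  have hq0 : (0:ℕ) < q := by omega
  -- finiteness
  have hfinpieces : ∀ i : Fin l, Finite (R ⧸ Ideal.span {π} ^ (μ i)) := by
    intro i
    apply Nat.finite_of_card_ne_zero
    rw [hcard]
    positivity
  have hfinM : Finite M := by
    have := hfinpieces
    exact Finite.of_equiv _ e.toEquiv.symm
  have hModFin : Module.Finite R M := by
    refine ⟨⟨(Set.finite_univ (α := M)).toFinset, ?_⟩⟩
    simp
  have hcardM : Nat.card M = q ^ (∑ i, μ i) := by
    rw [Nat.card_congr e.toEquiv, Nat.card_pi]
    simp only [hcard]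
    rw [Finset.prod_pow_eq_pow_sum]
  -- the residue maps
  have hle : ∀ i : Fin l, (Ideal.span {π} ^ (μ i) : Submodule R R) ≤
      Submodule.comap (LinearMap.id) m := by
    intro i
    simpa using (Ideal.pow_le_self (hμpos i).ne').trans hPmax.ge
  let φ : ∀ i : Fin l, (R ⧸ Ideal.span {π} ^ (μ i)) →ₗ[R] kk := fun i =>
    Submodule.mapQ _ _ LinearMap.id (hle i)
  have hφmk : ∀ (i : Fin l) (r : R),
      φ i (Submodule.Quotient.mk r) = Submodule.Quotient.mk r := by
    intro i r
    rfl
  have hφsurj : ∀ i, Surjective (φ i) := by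
    intro i y
    obtain ⟨r, rfl⟩ := Submodule.Quotient.mk_surjective _ y
    exact ⟨Submodule.Quotient.mk r, hφmk i r⟩
  let p : M →ₗ[R] (Fin l → kk) :=
    (LinearMap.pi fun i => (φ i).comp (LinearMap.proj i)).comp e.toLinearMap
  have hp_apply : ∀ (x : M) (i : Fin l), p x i = φ i (e x i) := fun _ _ => rfl
  have hpsurj : Surjective p := by
    intro y
    choose x hx using fun i => hφsurj i (y i)
    exact ⟨e.symm x, by funext i; rw [hp_apply, e.apply_symm_apply, hx]⟩
  -- kernel of p is inside m • ⊤
  have hker : ∀ x : M, p x = 0 → x ∈ m • (⊤ : Submodule R M) := by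
    intro x hx
    have hcomp : ∀ i, (e x) i ∈ m • (⊤ : Submodule R (R ⧸ Ideal.span {π} ^ (μ i))) := by
      intro i
      have h0 : φ i ((e x) i) = 0 := by
        have := congrFun hx i
        rwa [hp_apply] at this
      obtain ⟨r, hr⟩ := Submodule.Quotient.mk_surjective _ ((e x) i)
      have hrm : r ∈ m := by
        rw [← hr, hφmk] at h0
        exact (Submodule.Quotient.mk_eq_zero (p := m) (x := r)).mp h0
      rw [hPmax] at hrm
      obtain ⟨c, hc⟩ := Ideal.mem_span_singleton'.mp hrm
      have hπm : π ∈ m := by rw [hPmax]; exact Ideal.mem_span_singleton_self π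
      rw [← hr, ← hc]
      have hsm : (Submodule.Quotient.mk (c * π) : R ⧸ Ideal.span {π} ^ (μ i)) =
          π • Submodule.Quotient.mk c := by
        rw [← Submodule.Quotient.mk_smul]
        congr 1
        simp [smul_eq_mul, mul_comm]
      rw [hsm]
      exact Submodule.smul_mem_smul hπm trivial
    have hx2 : e x ∈ m • (⊤ : Submodule R (∀ i : Fin l, R ⧸ Ideal.span {π} ^ (μ i))) := by
      rw [← Finset.univ_sum_single (e x)]
      apply Submodule.sum_mem
      intro i _
      have hmem : Pi.single i ((e x) i) ∈
          Submodule.map (LinearMap.single R (fun j : Fin l => R ⧸ Ideal.span {π} ^ (μ j)) i)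
            (m • (⊤ : Submodule R (R ⧸ Ideal.span {π} ^ (μ i)))) :=
        ⟨(e x) i, hcomp i, rfl⟩
      rw [Submodule.map_smul''] at hmem
      exact smul_mono_right m (le_top : _ ≤ (⊤ : Submodule R (∀ j : Fin l, R ⧸ Ideal.span {π} ^ (μ j))))  hmem
    have hx3 : e.symm (e x) ∈ Submodule.map e.symm.toLinearMap
        (m • (⊤ : Submodule R (∀ i : Fin l, R ⧸ Ideal.span {π} ^ (μ i)))) :=
      ⟨e x, hx2, rfl⟩
    rw [Submodule.map_smul''] at hx3
    have hx4 := smul_mono_right m (le_top : _ ≤ (⊤ : Submodule R M)) hx3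
    simpa using hx4
  -- Nakayama
  have hNak : ∀ v : Fin d → M,
      span R (Set.range v) = ⊤ ↔ span R (Set.range (p ∘ v)) = ⊤ := by
    intro v
    constructor
    · intro h
      rw [Set.range_comp, Submodule.span_image, h, Submodule.map_top,
        LinearMap.range_eq_top.mpr hpsurj]
    · intro h
      rw [eq_top_iff]
      apply Submodule.le_of_le_smul_of_le_jacobson_bot
        (Module.Finite.fg_top (R := R) (M := M))
        ((IsLocalRing.jacobson_eq_maximalIdeal (⊥ : Ideal R) bot_ne_top).ge)
      intro x _
      have hpx : p x ∈ Submodule.map p (span R (Set.range v)) := by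
        rw [← Submodule.span_image, ← Set.range_comp, h]
        trivial
      obtain ⟨y, hy, hyx⟩ := hpx
      have hxy : x - y ∈ m • (⊤ : Submodule R M) := by
        apply hker
        rw [map_sub, hyx, sub_self]
      have := Submodule.add_mem_sup hy hxy
      simpa using this
  -- Hom set ≃ spanning tuples
  have eHom : {f : (Fin d → R) →ₗ[R] M // Surjective f} ≃
      {v : Fin d → M // span R (Set.range v) = ⊤} :=
    (((Pi.basisFun R (Fin d)).constr ℕ).toEquiv.subtypeEquiv (fun v => by
      rw [show ((((Pi.basisFun R (Fin d)).constr ℕ).toEquiv) v) =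
        (Pi.basisFun R (Fin d)).constr ℕ v from rfl,
        ← LinearMap.range_eq_top, Basis.constr_range])).symm
  -- componentwise map on tuples
  let Φ : (Fin d → M) →+ (Fin d → (Fin l → kk)) := (p.compLeft (Fin d)).toAddMonoidHom
  have hΦ : ∀ v : Fin d → M, Φ v = p ∘ v := fun _ => rfl
  have hΦsurj : Surjective Φ := by
    intro w
    choose x hx using fun i => hpsurj (w i)
    exact ⟨x, funext fun i => hx i⟩
  have key := fiber_count Φ hΦsurj (fun w => span R (Set.range w) = ⊤)
  -- identify the left side of key
  have hL : Nat.card {f : (Fin d → R) →ₗ[R] M // Surjective f} =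
      Nat.card {a : Fin d → M // span R (Set.range (Φ a)) = ⊤} := by
    rw [Nat.card_congr eHom]
    apply Nat.card_congr
    exact (Equiv.refl (Fin d → M)).subtypeEquiv (fun v => by rw [hΦ]; exact hNak v)
  -- total count : second application with trivial predicate
  have key2 := fiber_count Φ hΦsurj (fun _ => True)
  rw [Nat.card_congr (Equiv.subtypeUnivEquiv (fun _ => trivial)),
      Nat.card_congr (Equiv.subtypeUnivEquiv (fun _ => trivial))] at key2
  -- cardinalities of the function spaces
  have hcardkk : Nat.card (Fin l → kk) = q ^ l := by
    rw [Nat.card_pi]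
    simp [hq]
  have hcardA : Nat.card (Fin d → M) = (q ^ (∑ i, μ i)) ^ d := by
    rw [Nat.card_pi]
    simp [hcardM]
  have hcardB : Nat.card (Fin d → (Fin l → kk)) = (q ^ l) ^ d := by
    rw [Nat.card_pi]
    simp [hcardkk]
  set K : ℕ := Nat.card {x : Fin d → M // Φ x = 0} with hK
  have hKeq : (q ^ (∑ i, μ i)) ^ d = K * (q ^ l) ^ d := by
    rw [← hcardA, ← hcardB]
    exact key2
  -- spanning-tuple count over the residue field
  have : Fintype kk := Fintype.ofFinite kk
  have hfq : Fintype.card kk = q := by rw [← Nat.card_eq_fintype_card, hq]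
  have hcount : Nat.card {w : Fin d → (Fin l → kk) // span R (Set.range w) = ⊤} =
      ∏ i : Fin l, (q ^ d - q ^ (i : ℕ)) := by
    have hiff : ∀ w : Fin d → (Fin l → kk),
        span R (Set.range w) = ⊤ ↔ span kk (Set.range w) = ⊤ := by
      intro w
      rw [← Submodule.restrictScalars_span R kk Ideal.Quotient.mk_surjective,
        restrictScalars_eq_top_iff]
    rw [Nat.card_congr (Equiv.subtypeEquiv (Equiv.refl (Fin d → (Fin l → kk)))
      (p := fun w => span R (Set.range w) = ⊤)
      (q := fun w => span kk (Set.range w) = ⊤) hiff), count_spanning kk d l hld]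
    simp [hfq]
  -- assemble the natural-number count
  have hmain : Nat.card {f : (Fin d → R) →ₗ[R] M // Surjective f} =
      K * ∏ i : Fin l, (q ^ d - q ^ (i : ℕ)) := by
    rw [hL, key, hcount]
  -- now pure rational arithmetic
  rw [hmain]
  have hQ0 : (q : ℚ) ≠ 0 := by positivity
  have hQ1 : (1:ℚ) < q := by exact_mod_cast hq1
  have hfac : ∀ n : ℕ, n ≤ d → (q:ℚ) ^ d * (1 - ((q:ℚ)⁻¹) ^ n) = (q:ℚ) ^ d - (q:ℚ) ^ (d - n) := by
    intro n hn
    have h1 : (q:ℚ) ^ d = (q:ℚ) ^ (d - n) * (q:ℚ) ^ n := by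
      rw [← pow_add, Nat.sub_add_cancel hn]
    have h2 : (q:ℚ) ^ d * ((q:ℚ)⁻¹) ^ n = (q:ℚ) ^ (d - n) := by
      rw [h1, mul_assoc, ← mul_pow, mul_inv_cancel₀ hQ0, one_pow, mul_one]
    rw [mul_sub, mul_one, h2]
  have hne : ∀ i : ℕ, (1 - ((q:ℚ)⁻¹) ^ (i + 1)) ≠ 0 := by
    intro i
    have : ((q:ℚ)⁻¹) ^ (i + 1) < 1 := by
      apply pow_lt_one₀ (by positivity)
      · rw [inv_lt_one_iff₀]; right; exact hQ1
      · omega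
    intro hcon
    rw [sub_eq_zero] at hcon
    rw [← hcon] at this
    exact lt_irrefl _ this
  have hsplit : (∏ i ∈ Finset.range d, (1 - ((q : ℚ)⁻¹) ^ (i + 1))) =
      (∏ i ∈ Finset.range (d - l), (1 - ((q : ℚ)⁻¹) ^ (i + 1))) *
        ∏ i ∈ Finset.range l, (1 - ((q : ℚ)⁻¹) ^ ((d - l) + i + 1)) := by
    rw [← Finset.prod_range_add (fun i => (1 - ((q : ℚ)⁻¹) ^ (i + 1))) (d - l) l,
      Nat.sub_add_cancel hld]
  have hden : (∏ i ∈ Finset.range (d - l), (1 - ((q : ℚ)⁻¹) ^ (i + 1))) ≠ 0 :=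
    Finset.prod_ne_zero_iff.mpr (fun i _ => hne i)
  rw [hsplit, mul_comm (∏ i ∈ Finset.range (d - l), _), ← mul_assoc, mul_div_assoc,
    div_self hden, mul_one]
  -- LHS cast
  have hcast : ((K * ∏ i : Fin l, (q ^ d - q ^ (i : ℕ)) : ℕ) : ℚ) =
      (K : ℚ) * ∏ i : Fin l, ((q:ℚ) ^ d - (q:ℚ) ^ (i : ℕ)) := by
    push_cast
    congr 1
    apply Finset.prod_congr rfl
    intro i _
    rw [Nat.cast_sub (Nat.pow_le_pow_right hq0 (le_of_lt (lt_of_lt_of_le i.2 hld)))]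
    push_cast
    ring
  rw [hcast]
  -- use hKeq
  have hKQ : ((q:ℚ) ^ (∑ i, μ i)) ^ d = (K:ℚ) * ((q:ℚ) ^ l) ^ d := by
    exact_mod_cast hKeq
  have hrhs : (q : ℚ) ^ (d * ∑ i, μ i) = (K:ℚ) * (q:ℚ) ^ (l * d) := by
    rw [mul_comm d, pow_mul, hKQ, ← pow_mul]
  rw [hrhs]
  rw [mul_assoc]
  congr 1
  -- remains : ∏ (q^d - q^i) = q^(l*d) * ∏ (1 - q⁻¹^(d-l+i+1))
  rw [Fin.prod_univ_eq_prod_range (fun i => ((q:ℚ) ^ d - (q:ℚ) ^ i)) l]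
  have hql : ((q:ℚ)) ^ (l * d) = ∏ _i ∈ Finset.range l, (q:ℚ) ^ d := by
    rw [Finset.prod_const, Finset.card_range, ← pow_mul, mul_comm d l]
  rw [hql, ← Finset.prod_mul_distrib]
  rw [← Finset.prod_range_reflect (fun i => ((q:ℚ) ^ d - (q:ℚ) ^ i)) l]
  apply Finset.prod_congr rfl
  intro i hi
  rw [Finset.mem_range] at hi
  rw [hfac ((d - l) + i + 1) (by omega)]
  congr 2
  omega
end

section
/- (Functional equation for the (2,2) link, m=1) With f_{d,1}(t,q) = ∑_{r=0}^d (−1)^r q^{r(r−1)/2} t^r [d choose r]_q (t q^{d−r+1}; q)_r, the functional equation f_{d,1}(t,q) = q^{d²} t^{2d} f_{d,1}(q^{−d} t^{−1}, q) holds as an identity of rational functions (equivalently, of Laurent polynomials in t with coefficients in ℚ(q)). -/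
open Finset

private def Gb (q : ℚ) : ℕ → ℕ → ℚ
  | 0, 0 => 1
  | 0, _+1 => 0
  | _+1, 0 => 1
  | n+1, k+1 => q ^ (n - k) * Gb q n k + Gb q n (k+1)

private lemma Gb_zero (q : ℚ) : ∀ n k : ℕ, n < k → Gb q n k = 0 := by
  intro n
  induction n with
  | zero => intro k hk; match k, hk with | k+1, _ => rfl
  | succ n ih =>
    intro k hk
    match k, hk with
    | k+1, hk =>
      show q ^ (n-k) * Gb q n k + Gb q n (k+1) = 0
      rw [ih k (by omega), ih (k+1) (by omega)]; ring

private lemma Gb_diag (q : ℚ) : ∀ n : ℕ, Gb q n n = 1 := by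
  intro n
  induction n with
  | zero => rfl
  | succ n ih =>
    show q ^ (n-n) * Gb q n n + Gb q n (n+1) = 1
    rw [ih, Gb_zero q n (n+1) (by omega)]; simp

private def P (q x : ℚ) (n : ℕ) : ℚ := ∏ i ∈ Finset.range n, (1 - x * q ^ i)

private lemma P_succ (q x : ℚ) (n : ℕ) : P q x (n+1) = P q x n * (1 - x * q ^ n) :=
  Finset.prod_range_succ _ _

private lemma Gb_char (q : ℚ) : ∀ n k : ℕ, k ≤ n →
    Gb q n k * (P q q k * P q q (n - k)) = P q q n := by
  intro n
  induction n with
  | zero => intro k hk; interval_cases k; simp [Gb, P]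
  | succ n ih =>
    intro k hk
    match k with
    | 0 => simp [Gb, P]
    | k+1 =>
      show (q ^ (n-k) * Gb q n k + Gb q n (k+1)) * (P q q (k+1) * P q q (n+1-(k+1))) = P q q (n+1)
      rcases Nat.lt_or_ge k n with hkn | hkn
      · have h1 := ih k (by omega)
        have h2 := ih (k+1) (by omega)
        obtain ⟨m, hm⟩ : ∃ m, n - k = m + 1 := ⟨n - k - 1, by omega⟩
        have hP1 : P q q (k+1) = P q q k * (1 - q^(k+1)) := by
          rw [P_succ, ← pow_succ']
        have hP2 : P q q (n-k) = P q q m * (1 - q^(n-k)) := by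
          rw [hm, P_succ, ← pow_succ']
        have hP3 : P q q (n+1) = P q q n * (1 - q^(n+1)) := by
          rw [P_succ, ← pow_succ']
        have e6 : n - (k+1) = m := by omega
        have e7 : (q:ℚ) ^ (n-k) * q ^ (k+1) = q ^ (n+1) := by
          rw [← pow_add]; congr 1; omega
        rw [show n+1-(k+1) = n-k from by omega, hP1, hP2, hP3]
        rw [e6, hP1] at h2
        rw [hP2] at h1
        linear_combination q^(n-k)*(1-q^(k+1)) * h1 + (1-q^(n-k)) * h2 - P q q n * e7
      · have hkeq : k = n := by omega
        subst hkeq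
        rw [Gb_zero q k (k+1) (by omega), Gb_diag]
        simp [P]

private lemma P_ne_zero (q : ℚ) (hq1 : ∀ i : ℕ, 1 ≤ i → q ^ i ≠ 1) (n : ℕ) :
    P q q n ≠ 0 := by
  refine Finset.prod_ne_zero_iff.2 fun i _ => ?_
  have h := hq1 (i+1) (by omega)
  rw [← pow_succ'] at *
  intro hcon
  exact h (by linarith [sub_eq_zero.1 hcon])

private lemma choose_two_succ (n : ℕ) : (n+1).choose 2 = n.choose 2 + n := by
  have h : (n+1).choose 2 = n.choose 1 + n.choose 2 := rfl
  rw [h, Nat.choose_one_right]; omega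

private lemma two_choose_two (k : ℕ) : 2 * k.choose 2 + k = k * k := by
  induction k with
  | zero => rfl
  | succ k ih => rw [choose_two_succ]; nlinarith

private lemma choose_two_add (a b : ℕ) : (a+b).choose 2 = a.choose 2 + b.choose 2 + a*b := by
  induction b with
  | zero => simp
  | succ b ih =>
    have h2 : a*(b+1) = a*b + a := by ring
    rw [show a+(b+1) = (a+b)+1 from rfl, choose_two_succ, ih, choose_two_succ, h2]; omega

private lemma exp_eq (d r k : ℕ) (hk : k ≤ r) (hr : r ≤ d) :
    r.choose 2 + k.choose 2 + (d - r + 1) * k = d * k + (r - k).choose 2 := by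
  obtain ⟨m, rfl⟩ : ∃ m, r = k + m := ⟨r - k, by omega⟩
  obtain ⟨e, rfl⟩ : ∃ e, d = k + m + e := ⟨d - (k+m), by omega⟩
  rw [show k + m + e - (k + m) = e from by omega, show k + m - k = m from by omega,
    choose_two_add]
  have h1 := two_choose_two k
  have h2 : (e+1)*k = e*k + k := by ring
  have h3 : (k+m+e)*k = k*k + m*k + e*k := by ring
  have h4 : k*m = m*k := Nat.mul_comm ..
  omega

private lemma sum_range_id_choose (n : ℕ) : ∑ i ∈ Finset.range n, i = n.choose 2 := by
  induction n with
  | zero => rfl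
  | succ n ih => rw [Finset.sum_range_succ, ih, choose_two_succ]

private lemma gb_binom (q x : ℚ) : ∀ n : ℕ,
    P q x n = ∑ k ∈ Finset.range (n+1), (-1:ℚ)^k * q^(k.choose 2) * Gb q n k * x^k := by
  intro n
  induction n with
  | zero => simp [P, Gb]
  | succ n ih =>
    rw [show P q x (n+1) = P q x n * (1 - x * q^n) from Finset.prod_range_succ _ _, ih]
    rw [Finset.sum_range_succ' (fun k => (-1:ℚ)^k * q^(k.choose 2) * Gb q (n+1) k * x^k) (n+1)]
    have hGb0 : Gb q (n+1) 0 = 1 := rfl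
    have hsplit : ∀ k ∈ Finset.range (n+1),
        (-1:ℚ)^(k+1) * q^((k+1).choose 2) * Gb q (n+1) (k+1) * x^(k+1)
        = (-1)^(k+1) * q^((k+1).choose 2) * Gb q n (k+1) * x^(k+1)
          + (-(x*q^n)) * ((-1)^k * q^(k.choose 2) * Gb q n k * x^k) := by
      intro k hk
      rw [Finset.mem_range] at hk
      have hrec : Gb q (n+1) (k+1) = q^(n-k) * Gb q n k + Gb q n (k+1) := rfl
      rw [hrec]
      have hqe : (q:ℚ)^((k+1).choose 2) * q^(n-k) = q^n * q^(k.choose 2) := by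
        rw [← pow_add, ← pow_add]; congr 1
        rw [choose_two_succ]; omega
      calc (-1:ℚ)^(k+1) * q^((k+1).choose 2) * (q^(n-k) * Gb q n k + Gb q n (k+1)) * x^(k+1)
          = ((-1:ℚ)^(k+1) * (q^((k+1).choose 2) * q^(n-k)) * Gb q n k * x^(k+1))
            + (-1)^(k+1) * q^((k+1).choose 2) * Gb q n (k+1) * x^(k+1) := by ring
        _ = _ := by rw [hqe]; ring
    rw [Finset.sum_congr rfl hsplit, Finset.sum_add_distrib, hGb0]
    have htop : ((-1:ℚ))^(n+1) * q^((n+1).choose 2) * Gb q n (n+1) * x^(n+1) = 0 := by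
      rw [Gb_zero q n (n+1) (by omega)]; ring
    have hfirst : (∑ k ∈ Finset.range (n+1),
        (-1:ℚ)^(k+1) * q^((k+1).choose 2) * Gb q n (k+1) * x^(k+1))
        = (∑ k ∈ Finset.range (n+1), (-1:ℚ)^k * q^(k.choose 2) * Gb q n k * x^k) - 1 := by
      rw [Finset.sum_range_succ, htop, add_zero,
        Finset.sum_range_succ' (fun k => (-1:ℚ)^k * q^(k.choose 2) * Gb q n k * x^k) n]
      have h0 : ((-1:ℚ))^0 * q^(Nat.choose 0 2) * Gb q n 0 * x^0 = 1 := by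
        cases n <;> simp [Gb]
      rw [h0]; ring
    rw [hfirst, ← Finset.mul_sum]
    norm_num [Nat.choose]
    ring

section
variable {q : ℚ} (hq1 : ∀ i : ℕ, 1 ≤ i → q ^ i ≠ 1)
include hq1

private lemma Gb_trinomial (d r k : ℕ) (hk : k ≤ r) (hr : r ≤ d) :
    Gb q d r * Gb q r k = Gb q d k * Gb q (d-k) (r-k) := by
  have c1 := Gb_char q d r hr
  have c2 := Gb_char q r k hk
  have c3 := Gb_char q d k (le_trans hk hr)
  have c4 := Gb_char q (d-k) (r-k) (by omega)
  rw [show d - k - (r - k) = d - r from by omega] at c4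
  have hne : P q q k * P q q (r-k) * P q q (d-r) ≠ 0 :=
    mul_ne_zero (mul_ne_zero (P_ne_zero q hq1 k) (P_ne_zero q hq1 (r-k))) (P_ne_zero q hq1 (d-r))
  apply mul_right_cancel₀ hne
  linear_combination (Gb q d r * P q q (d-r)) * c2 + c1 - (Gb q d k * P q q k) * c4 - c3

private lemma Gb_symm (d r : ℕ) (hr : r ≤ d) : Gb q d (d - r) = Gb q d r := by
  have c1 := Gb_char q d (d-r) (by omega)
  rw [show d - (d - r) = r from by omega] at c1
  have c2 := Gb_char q d r hr
  have hne : P q q (d-r) * P q q r ≠ 0 :=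
    mul_ne_zero (P_ne_zero q hq1 (d-r)) (P_ne_zero q hq1 r)
  apply mul_right_cancel₀ hne
  linear_combination c1 - c2

private lemma qbin_eq_Gb (d r : ℕ) (hr : r ≤ d) :
    P q q d / (P q q r * P q q (d - r)) = Gb q d r := by
  rw [div_eq_iff (mul_ne_zero (P_ne_zero q hq1 r) (P_ne_zero q hq1 (d-r)))]
  linear_combination - Gb_char q d r hr

end

/-- Functional equation for the (2,2) link, m = 1.  With
`f_{d,1}(t,q) = ∑_{r=0}^d (-1)^r q^{r(r-1)/2} t^r [d r]_q (t q^{d-r+1};q)_r`, the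
functional equation `f_{d,1}(t,q) = q^{d²} t^{2d} f_{d,1}(q^{-d} t⁻¹, q)` holds (as an
identity of rational functions; stated here for all rational `t ≠ 0` and `q ≠ 0` with
`q` not a nontrivial root of unity, so that all denominators are nonzero). -/
theorem statement16 (d : ℕ) (t q : ℚ) (ht : t ≠ 0) (hq0 : q ≠ 0)
    (hq1 : ∀ i : ℕ, 1 ≤ i → q ^ i ≠ 1) :
    let poch : ℚ → ℕ → ℚ := fun x n => ∏ i ∈ Finset.range n, (1 - x * q ^ i)
    let qbin : ℕ → ℕ → ℚ := fun n r => poch q n / (poch q r * poch q (n - r))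
    let f : ℚ → ℚ := fun s =>
      ∑ r ∈ Finset.range (d + 1),
        (-1 : ℚ) ^ r * q ^ (r.choose 2) * s ^ r * qbin d r * poch (s * q ^ (d - r + 1)) r
    f t = q ^ (d ^ 2) * t ^ (2 * d) * f ((q ^ d)⁻¹ * t⁻¹) := by
  intro poch qbin f
  have hqb : ∀ r : ℕ, r ≤ d → qbin d r = Gb q d r := fun r hr => qbin_eq_Gb hq1 d r hr
  -- the common middle form
  set S : ℚ := ∑ s ∈ Finset.range (d+1), q^(d*s) * t^(2*s) * Gb q d s * P q t (d - s) with hS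
  have partB : f t = S := by
    have step1 : f t = ∑ r ∈ Finset.range (d+1), ∑ k ∈ Finset.range (r+1),
        ((-1:ℚ)^r * q^(r.choose 2) * t^r * Gb q d r) *
          ((-1:ℚ)^k * q^(k.choose 2) * Gb q r k * (t*q^(d-r+1))^k) := by
      refine Finset.sum_congr rfl fun r hr => ?_
      rw [Finset.mem_range] at hr
      show (-1:ℚ)^r * q^(r.choose 2) * t^r * qbin d r * poch (t*q^(d-r+1)) r = _
      rw [hqb r (by omega)]
      have hpp : poch (t*q^(d-r+1)) r = P q (t*q^(d-r+1)) r := rfl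
      rw [hpp, gb_binom, Finset.mul_sum]
    have step2 : S = ∑ s ∈ Finset.range (d+1), ∑ j ∈ Finset.range (d-s+1),
        (q^(d*s) * t^(2*s) * Gb q d s) *
          ((-1:ℚ)^j * q^(j.choose 2) * Gb q (d-s) j * t^j) := by
      refine Finset.sum_congr rfl fun s hs => ?_
      rw [gb_binom q t (d-s), Finset.mul_sum]
    rw [step1, step2, Finset.sum_sigma', Finset.sum_sigma']
    refine Finset.sum_nbij' (fun x => ⟨x.2, x.1 - x.2⟩) (fun y => ⟨y.1 + y.2, y.1⟩)
      ?_ ?_ ?_ ?_ ?_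
    · intro a ha
      simp only [Finset.mem_sigma, Finset.mem_range] at *
      omega
    · intro a ha
      simp only [Finset.mem_sigma, Finset.mem_range] at *
      omega
    · intro a ha
      obtain ⟨r, k⟩ := a
      simp only [Finset.mem_sigma, Finset.mem_range] at ha
      show (⟨k + (r - k), k⟩ : Σ _ : ℕ, ℕ) = ⟨r, k⟩
      rw [show k + (r - k) = r from by omega]
    · intro a ha
      obtain ⟨s, j⟩ := a
      show (⟨s, s + j - s⟩ : Σ _ : ℕ, ℕ) = ⟨s, j⟩
      rw [show s + j - s = j from by omega]
    · intro a ha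
      obtain ⟨r, k⟩ := a
      simp only [Finset.mem_sigma, Finset.mem_range] at ha
      obtain ⟨hr, hk⟩ : r ≤ d ∧ k ≤ r := ⟨by omega, by omega⟩
      show ((-1:ℚ)^r * q^(r.choose 2) * t^r * Gb q d r) *
          ((-1:ℚ)^k * q^(k.choose 2) * Gb q r k * (t*q^(d-r+1))^k)
        = (q^(d*k) * t^(2*k) * Gb q d k) *
          ((-1:ℚ)^(r-k) * q^((r-k).choose 2) * Gb q (d-k) (r-k) * t^(r-k))
      have hG := Gb_trinomial hq1 d r k hk hr
      have hc := exp_eq d r k hk hr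
      have hrk : r + k = (r-k) + 2*k := by omega
      calc ((-1:ℚ)^r * q^(r.choose 2) * t^r * Gb q d r) *
          ((-1:ℚ)^k * q^(k.choose 2) * Gb q r k * (t*q^(d-r+1))^k)
          = (-1:ℚ)^(r+k) * q^(r.choose 2 + k.choose 2 + (d-r+1)*k) * t^(r+k)
              * (Gb q d r * Gb q r k) := by
            simp only [mul_pow, ← pow_mul, pow_add]; ring
        _ = (-1:ℚ)^((r-k)+2*k) * q^(d*k + (r-k).choose 2) * t^((r-k)+2*k)
              * (Gb q d k * Gb q (d-k) (r-k)) := by rw [hG, hc, hrk]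
        _ = _ := by simp only [pow_add, pow_mul, neg_one_sq, one_pow]; ring
  have partA : q ^ (d ^ 2) * t ^ (2 * d) * f ((q ^ d)⁻¹ * t⁻¹) = S := by
    have hrefl : S = ∑ r ∈ Finset.range (d+1),
        q^(d*(d-r)) * t^(2*(d-r)) * Gb q d (d-r) * P q t (d-(d-r)) := by
      rw [hS, ← Finset.sum_range_reflect
        (fun s => q^(d*s) * t^(2*s) * Gb q d s * P q t (d - s)) (d+1)]
      refine Finset.sum_congr rfl fun r hr => ?_
      rw [Finset.mem_range] at hr
      rw [show d + 1 - 1 - r = d - r from by omega]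
    rw [hrefl, Finset.mul_sum]
    refine Finset.sum_congr rfl fun r hr => ?_
    rw [Finset.mem_range] at hr
    have hrd : r ≤ d := by omega
    show q^(d^2) * t^(2*d) *
        ((-1:ℚ)^r * q^(r.choose 2) * ((q^d)⁻¹*t⁻¹)^r * qbin d r *
          P q ((q^d)⁻¹*t⁻¹ * q^(d-r+1)) r)
      = q^(d*(d-r)) * t^(2*(d-r)) * Gb q d (d-r) * P q t (d-(d-r))
    rw [hqb r hrd, Gb_symm hq1 d r hrd, show d-(d-r) = r from by omega]
    -- key product transformation
    have key : P q ((q^d)⁻¹*t⁻¹ * q^(d-r+1)) r * (t^r * q^(r.choose 2))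
        = (-1:ℚ)^r * P q t r := by
      have h1 : (t:ℚ)^r * q^(r.choose 2) = ∏ i ∈ Finset.range r, (t * q^(r-1-i)) := by
        rw [Finset.prod_mul_distrib, Finset.prod_const, Finset.card_range,
          Finset.prod_pow_eq_pow_sum]
        congr 1
        rw [Finset.sum_range_reflect (fun j => j) r, sum_range_id_choose]
      rw [h1]
      simp only [P]
      rw [← Finset.prod_mul_distrib]
      have hfac : ∀ i ∈ Finset.range r,
          (1 - ((q^d)⁻¹*t⁻¹ * q^(d-r+1)) * q^i) * (t * q^(r-1-i))
          = -(1 - t * q^(r-1-i)) := by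
        intro i hi
        rw [Finset.mem_range] at hi
        have hq' : (q:ℚ)^(d-r+1) * (q^i * q^(r-1-i)) = q^d := by
          rw [← pow_add, ← pow_add]; congr 1; omega
        have h2 : ((q:ℚ)^d)⁻¹*t⁻¹ * q^(d-r+1) * q^i * (t * q^(r-1-i)) = 1 := by
          field_simp
          linear_combination hq'
        linear_combination -h2
      rw [Finset.prod_congr rfl hfac]
      have : ∀ i ∈ Finset.range r, -(1 - t * q^(r-1-i)) = (-1) * (1 - t * q^(r-1-i)) := by
        intro i _; ring
      rw [Finset.prod_congr rfl this, Finset.prod_mul_distrib, Finset.prod_const,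
        Finset.card_range, Finset.prod_range_reflect (fun j => 1 - t * q^j) r]
    have hne : (t:ℚ)^r * q^(r.choose 2) ≠ 0 :=
      mul_ne_zero (pow_ne_zero _ ht) (pow_ne_zero _ hq0)
    have hpoch2 : P q ((q^d)⁻¹*t⁻¹ * q^(d-r+1)) r
        = (-1:ℚ)^r * P q t r / (t^r * q^(r.choose 2)) := by
      rw [eq_div_iff hne]; exact key
    have e1 : (q:ℚ)^(d^2) = q^(d*(d-r)) * q^(d*r) := by
      rw [← pow_add]; congr 1
      rw [pow_two, ← Nat.mul_add, Nat.sub_add_cancel hrd]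
    have e2 : (t:ℚ)^(2*d) = t^(2*(d-r)) * t^(2*r) := by
      rw [← pow_add]; congr 1; omega
    have e3 : (((q:ℚ)^d)⁻¹*t⁻¹)^r = (q^(d*r))⁻¹ * (t^r)⁻¹ := by
      rw [mul_pow, inv_pow, inv_pow, ← pow_mul]
    rw [hpoch2, e1, e2, e3]
    have hq2 : (q:ℚ)^(d*r) ≠ 0 := pow_ne_zero _ hq0
    have ht2 : (t:ℚ)^r ≠ 0 := pow_ne_zero _ ht
    field_simp
    have hm1 : (-1:ℚ)^r * (-1:ℚ)^r = 1 := by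
      rw [← mul_pow]; norm_num
    linear_combination (t^(2*r)
      * Gb q d r * P q t r) * hm1
  rw [partB, partA]
end
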